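/- arXiv:2411.03026 — 2 statements merged into one kernel-verified Lean document; each statement's English description precedes it below -/
import Mathlib

section
/- Let L be a linear subspace of ℝⁿ, let q̂⁰, ε ∈ ℝⁿ with P_L q̂⁰ ≠ 0, and set q⁰ = q̂⁰ − ε. Then the intervention σ = P_L q̂⁰ / ‖P_L q̂⁰‖² satisfies σ·q⁰ = 1 − (P_L q̂⁰ · P_L ε)/‖P_L q̂⁰‖², and in particular σ·q⁰ ≥ 1 − ‖P_L ε‖ / ‖P_L q̂⁰‖. -/
noncomputable section
open Matrix MeasureTheory Filter

/-- Vectors in `ℝⁿ` with the Euclidean norm/inner product. -/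
abbrev Vec (n : ℕ) := EuclideanSpace ℝ (Fin n)

variable {n : ℕ}

/-- Price effect `ṗ = −(I − D)⁻¹ σ`. -/
def pDot (D : Matrix (Fin n) (Fin n) ℝ) (σ : Vec n) : Vec n :=
  -(Matrix.toEuclideanLin (1 - D)⁻¹ σ)

/-- Quantity effect `q̇ = D ṗ`. -/
def qDot (D : Matrix (Fin n) (Fin n) ℝ) (σ : Vec n) : Vec n :=
  Matrix.toEuclideanLin D (pDot D σ)

/-- Expenditure derivative `Ṡ = σ·q⁰`. -/
def SDot (q σ : Vec n) : ℝ := inner ℝ σ q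

/-- Consumer surplus derivative `Ċ = −q⁰·ṗ`. -/
def CDot (D : Matrix (Fin n) (Fin n) ℝ) (q σ : Vec n) : ℝ := -(inner ℝ q (pDot D σ) : ℝ)

/-- Producer surplus derivative `Ṗ = 2 q⁰·q̇`. -/
def PDot (D : Matrix (Fin n) (Fin n) ℝ) (q σ : Vec n) : ℝ := 2 * (inner ℝ q (qDot D σ) : ℝ)

/-- Total surplus derivative `Ẇ = Ċ + Ṗ − Ṡ`. -/
def WDot (D : Matrix (Fin n) (Fin n) ℝ) (q σ : Vec n) : ℝ :=
  CDot D q σ + PDot D q σ - SDot q σ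

/-- A normalized Slutsky matrix: symmetric, negative semidefinite, diagonal entries `−1`. -/
def IsSlutsky (D : Matrix (Fin n) (Fin n) ℝ) : Prop :=
  D.IsSymm ∧ (-D).PosSemidef ∧ ∀ i, D i i = -1

/-- The span of the eigenvectors of a matrix whose eigenvalues are at least `M`
in absolute value. -/
def eigSpan (A : Matrix (Fin n) (Fin n) ℝ) (M : ℝ) : Submodule ℝ (Vec n) :=
  ⨆ μ ∈ {μ : ℝ | M ≤ |μ|}, Module.End.eigenspace (Matrix.toEuclideanLin A) μ

/-- Orthogonal projection onto a subspace, as a map into the ambient space. -/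
def projVec (V : Submodule ℝ (Vec n)) (x : Vec n) : Vec n :=
  (Submodule.orthogonalProjection V x : Vec n)

/-- Orthogonal projection onto a subspace, as a continuous linear endomorphism. -/
def projCLM (V : Submodule ℝ (Vec n)) : Vec n →L[ℝ] Vec n :=
  V.subtypeL.comp (Submodule.orthogonalProjection V)

/-- Spectral (operator) norm of a matrix. -/
def specNorm (A : Matrix (Fin n) (Fin n) ℝ) : ℝ :=
  ‖LinearMap.toContinuousLinearMap (Matrix.toEuclideanLin A)‖

/-- the normalized-projection intervention has expenditure derivative
1 - (P_L qhat . P_L eps)/normsq(P_L qhat), which is at least 1 - norm(P_L eps)/norm(P_L qhat). -/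
theorem stmt10 (n : ℕ) (L : Submodule ℝ (Vec n)) (qhat ε : Vec n)
    (h : projVec L qhat ≠ 0) :
    (inner ℝ ((‖projVec L qhat‖ ^ 2)⁻¹ • projVec L qhat) (qhat - ε) : ℝ) =
        1 - (inner ℝ (projVec L qhat) (projVec L ε) : ℝ) / ‖projVec L qhat‖ ^ 2 ∧
    1 - ‖projVec L ε‖ / ‖projVec L qhat‖ ≤
      (inner ℝ ((‖projVec L qhat‖ ^ 2)⁻¹ • projVec L qhat) (qhat - ε) : ℝ) := by
  have hpos : (0:ℝ) < ‖projVec L qhat‖ := norm_pos_iff.2 h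
  have h1 : (inner ℝ (projVec L qhat) qhat : ℝ) = ‖projVec L qhat‖ ^ 2 := by
    have := Submodule.inner_orthogonalProjection_eq_of_mem_left (𝕜 := ℝ) (K := L)
      (Submodule.orthogonalProjection L qhat) qhat
    simp only [projVec]
    rw [← this, Submodule.coe_inner, real_inner_self_eq_norm_sq]
  have h2 : (inner ℝ (projVec L qhat) ε : ℝ) = inner ℝ (projVec L qhat) (projVec L ε) := by
    have := Submodule.inner_orthogonalProjection_eq_of_mem_left (𝕜 := ℝ) (K := L)
      (Submodule.orthogonalProjection L qhat) ε
    simp only [projVec]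
    rw [← this, Submodule.coe_inner]
  have key : (inner ℝ ((‖projVec L qhat‖ ^ 2)⁻¹ • projVec L qhat) (qhat - ε) : ℝ) =
      1 - (inner ℝ (projVec L qhat) (projVec L ε) : ℝ) / ‖projVec L qhat‖ ^ 2 := by
    rw [real_inner_smul_left, inner_sub_right, h1, ← h2]
    field_simp
  refine ⟨key, ?_⟩
  rw [key]
  have cs := abs_real_inner_le_norm (projVec L qhat) (projVec L ε)
  have : (inner ℝ (projVec L qhat) (projVec L ε) : ℝ) / ‖projVec L qhat‖ ^ 2 ≤
      ‖projVec L ε‖ / ‖projVec L qhat‖ := by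
    rw [div_le_div_iff₀ (by positivity) hpos]
    calc (inner ℝ (projVec L qhat) (projVec L ε) : ℝ) * ‖projVec L qhat‖
        ≤ ‖projVec L qhat‖ * ‖projVec L ε‖ * ‖projVec L qhat‖ := by
          apply mul_le_mul_of_nonneg_right ((le_abs_self _).trans cs) hpos.le
      _ = ‖projVec L ε‖ * ‖projVec L qhat‖ ^ 2 := by ring
  linarith
end
end

section
/- Let n ≥ 2, u¹ = n^{−1/2}·𝟙, and D* = −(n/2)·u¹(u¹)ᵀ − (1/2)·I. Then D* is a normalized Slutsky matrix with eigenvalue −(n+1)/2 on span(u¹) and eigenvalue −1/2 on the orthogonal complement of u¹. Moreover, let (u²,…,uⁿ) be any orthonormal basis of the orthogonal complement of u¹, let s₂,…,sₙ ∈ {−1, +1}, let 0 < f ≤ (n−1)^{−1/2}, and set q⁰ = (1/2)·(u¹ + f·Σ_{ℓ=2}^n s_ℓ u^ℓ). Then ‖q⁰‖ ≤ 1 and, for every M with 1/2 < M ≤ (n+1)/2, the projection of q⁰ onto L(D*, M) equals (1/2)·u¹ and has norm 1/2; in particular the market state (D*, q⁰) has (M, 0.49)-recoverable structure. -/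
noncomputable section
open Matrix MeasureTheory Filter

variable {n : ℕ}

/-- The all-ones vector. -/
def onesV (n : ℕ) : Vec n := WithLp.toLp 2 (fun _ => (1 : ℝ))


/-- Auxiliary: the action of `D*` as a linear map. -/
theorem stmt15_aux_Dapply (n : ℕ) (u1 : Vec n)
    (Dstar : Matrix (Fin n) (Fin n) ℝ)
    (hDstar : Dstar = (-((n : ℝ) / 2)) • Matrix.of (fun i j => u1 i * u1 j) -
      (1 / 2 : ℝ) • (1 : Matrix (Fin n) (Fin n) ℝ)) (v : Vec n) :
    Matrix.toEuclideanLin Dstar v = (-((n:ℝ)/2) * (inner ℝ u1 v : ℝ)) • u1 - (1/2:ℝ) • v := by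
  ext i
  show (Dstar *ᵥ (v : Fin n → ℝ)) i = _
  simp only [hDstar, Matrix.mulVec, dotProduct, PiLp.inner_apply, Matrix.one_apply,
    PiLp.sub_apply, PiLp.smul_apply, Matrix.sub_apply, Matrix.smul_apply, Matrix.of_apply,
    sub_mul, ite_mul, one_mul, zero_mul, Finset.sum_sub_distrib, smul_ite, smul_zero,
    smul_eq_mul, Finset.sum_ite_eq, Finset.mem_univ, if_true,
    RCLike.inner_apply, conj_trivial]
  have h1 : ∑ x, -((n:ℝ) / 2) * (u1 i * u1 x) * v x
      = (-((n:ℝ) / 2) * ∑ x, v x * u1 x) * u1 i := by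
    rw [Finset.mul_sum, Finset.sum_mul]
    exact Finset.sum_congr rfl fun j _ => by ring
  have h2 : ∑ x, ((1:ℝ)/2 * if i = x then (1:ℝ) else 0) * v x = 1/2 * v i := by simp
  rw [h1, h2]

/-- for D* = -(n/2) u1 u1^T - (1/2) I with u1 = n^{-1/2} 1: D* is a
normalized Slutsky matrix with eigenvalue -(n+1)/2 on span(u1) and -1/2 on its
orthogonal complement; and for q0 = (1/2)(u1 + f * sum s_l u^l) built from an
orthonormal basis of the complement and signs s_l, with 0 < f ≤ (n-1)^{-1/2}, one has
norm(q0) ≤ 1 and, for 1/2 < M ≤ (n+1)/2, the projection of q0 onto L(D*,M) equals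
(1/2) u1 and has norm 1/2 ≥ 0.49 (so the state has (M, 0.49)-recoverable structure). -/
theorem stmt15 (n : ℕ) (hn : 2 ≤ n)
    (u1 : Vec n) (hu1 : u1 = (Real.sqrt n)⁻¹ • onesV n)
    (Dstar : Matrix (Fin n) (Fin n) ℝ)
    (hDstar : Dstar = (-((n : ℝ) / 2)) • Matrix.of (fun i j => u1 i * u1 j) -
      (1 / 2 : ℝ) • (1 : Matrix (Fin n) (Fin n) ℝ)) :
    (IsSlutsky Dstar ∧
      Matrix.toEuclideanLin Dstar u1 = (-(((n : ℝ) + 1) / 2)) • u1 ∧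
      (∀ v : Vec n, (inner ℝ u1 v : ℝ) = 0 →
        Matrix.toEuclideanLin Dstar v = (-(1 / 2 : ℝ)) • v)) ∧
    ∀ (u : Fin n → Vec n), Orthonormal ℝ u → u ⟨0, Nat.lt_of_lt_of_le Nat.zero_lt_two hn⟩ = u1 →
    ∀ (s : Fin n → ℝ), (∀ ℓ : Fin n, ℓ ≠ ⟨0, Nat.lt_of_lt_of_le Nat.zero_lt_two hn⟩ → s ℓ = 1 ∨ s ℓ = -1) →
    ∀ f : ℝ, 0 < f → f ≤ (Real.sqrt ((n : ℝ) - 1))⁻¹ →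
    ∀ q0 : Vec n,
      q0 = (1 / 2 : ℝ) • (u1 + f • ∑ ℓ ∈ Finset.univ.filter (fun ℓ => ℓ ≠ ⟨0, Nat.lt_of_lt_of_le Nat.zero_lt_two hn⟩), s ℓ • u ℓ) →
      ‖q0‖ ≤ 1 ∧
      ∀ M : ℝ, 1 / 2 < M → M ≤ ((n : ℝ) + 1) / 2 →
        projVec (eigSpan Dstar M) q0 = (1 / 2 : ℝ) • u1 ∧
        ‖projVec (eigSpan Dstar M) q0‖ = 1 / 2 ∧
        (0.49 : ℝ) ≤ ‖projVec (eigSpan Dstar M) q0‖ := by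
  have hn0 : (0:ℝ) < n := by exact_mod_cast Nat.lt_of_lt_of_le Nat.zero_lt_two hn
  have hn2 : (2:ℝ) ≤ n := by exact_mod_cast hn
  have hT := stmt15_aux_Dapply n u1 Dstar hDstar
  have hip1 : (inner ℝ u1 u1 : ℝ) = 1 := by
    simp [hu1, onesV, PiLp.inner_apply, Finset.sum_const, Real.mul_self_sqrt hn0.le, -inner_self_eq_norm_sq_to_K]
    field_simp
    rw [Real.sq_sqrt hn0.le]
  have hnu1 : ‖u1‖ = 1 := by
    have h := real_inner_self_eq_norm_sq u1
    rw [hip1] at h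
    nlinarith [norm_nonneg u1]
  have hsym : Dstar.IsSymm := by
    refine Matrix.IsSymm.ext fun i j => ?_
    simp only [hDstar, Matrix.sub_apply, Matrix.smul_apply, Matrix.of_apply,
      Matrix.one_apply, smul_eq_mul]
    by_cases h : i = j
    · subst h; ring
    · simp [h, Ne.symm h, mul_comm]
  have heig : Matrix.toEuclideanLin Dstar u1 = (-(((n : ℝ) + 1) / 2)) • u1 := by
    rw [hT, hip1]; module
  refine ⟨⟨⟨hsym, ⟨?_, ?_⟩, ?_⟩, heig, ?_⟩, ?_⟩
  · rw [Matrix.IsHermitian, Matrix.conjTranspose_eq_transpose_of_trivial]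
    exact hsym.neg
  · intro x0
    rw [show (x0.sum fun i xi => x0.sum fun j xj => star xi * (-Dstar) i j * xj) = star (⇑x0) ⬝ᵥ ((-Dstar) *ᵥ ⇑x0) by
      simp [dotProduct, mulVec, Finsupp.sum_fintype, Finset.mul_sum, mul_assoc]]
    generalize (⇑x0 : Fin n → ℝ) = x
    set x' : Vec n := (WithLp.equiv 2 (Fin n → ℝ)).symm x with hx'
    have hdot : star x ⬝ᵥ ((-Dstar) *ᵥ x)
        = -(inner ℝ x' (Matrix.toEuclideanLin Dstar x') : ℝ) := by
      simp [Matrix.neg_mulVec, dotProduct, PiLp.inner_apply, Pi.neg_apply, mul_neg,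
        Matrix.toEuclideanLin_apply, x']
      exact Finset.sum_congr rfl fun _ _ => mul_comm _ _
    rw [hdot, hT x', inner_sub_right, real_inner_smul_right, real_inner_smul_right,
      real_inner_comm x' u1, real_inner_self_eq_norm_sq]
    nlinarith [mul_nonneg hn0.le (mul_self_nonneg ((inner ℝ x' u1 : ℝ))), sq_nonneg ‖x'‖]
  · intro i
    have hd : u1 i * u1 i = (n:ℝ)⁻¹ := by
      have h2 : (Real.sqrt n)⁻¹ * (Real.sqrt n)⁻¹ = (n:ℝ)⁻¹ := by
        rw [← mul_inv, Real.mul_self_sqrt hn0.le]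
      rw [hu1]; simpa [onesV] using h2
    simp only [hDstar, Matrix.sub_apply, Matrix.smul_apply, Matrix.of_apply,
      Matrix.one_apply_eq, smul_eq_mul, hd]
    field_simp
    ring
  · intro v hv; rw [hT, hv]; simp
  -- Part B
  intro u hu hu0 s hs f hf hf' q0 hq0
  set i0 : Fin n := ⟨0, Nat.lt_of_lt_of_le Nat.zero_lt_two hn⟩ with hi0
  set F : Finset (Fin n) := Finset.univ.filter (fun ℓ => ℓ ≠ i0) with hF
  set w : Vec n := ∑ ℓ ∈ F, s ℓ • u ℓ with hw
  have horth : ∀ ℓ ∈ F, (inner ℝ u1 (u ℓ) : ℝ) = 0 := by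
    intro ℓ hℓ
    have hne : i0 ≠ ℓ := by
      simp only [hF, Finset.mem_filter, Finset.mem_univ, true_and] at hℓ
      exact hℓ.symm
    rw [← hu0]; exact hu.2 hne
  have hs1 : ∀ ℓ ∈ F, s ℓ * s ℓ = 1 := by
    intro ℓ hℓ
    have hℓ' : ℓ ≠ i0 := by
      simp only [hF, Finset.mem_filter, Finset.mem_univ, true_and] at hℓ; exact hℓ
    rcases hs ℓ hℓ' with h | h <;> rw [h] <;> norm_num
  have hcard : (F.card : ℝ) = (n:ℝ) - 1 := by
    rw [hF, Finset.filter_ne', Finset.card_erase_of_mem (Finset.mem_univ _)]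
    rw [Finset.card_univ, Fintype.card_fin]
    have h1n : 1 ≤ n := by omega
    push_cast [Nat.cast_sub h1n]
    ring
  have hipw : (inner ℝ u1 w : ℝ) = 0 := by
    rw [hw, inner_sum]
    refine Finset.sum_eq_zero fun ℓ hℓ => ?_
    rw [real_inner_smul_right, horth ℓ hℓ, mul_zero]
  have hww : (inner ℝ w w : ℝ) = (n:ℝ) - 1 := by
    rw [hw, hu.inner_sum]
    simp only [conj_trivial]
    rw [Finset.sum_congr rfl hs1, Finset.sum_const, nsmul_eq_mul, mul_one, hcard]
  have hnw : ‖w‖ = Real.sqrt ((n:ℝ) - 1) := by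
    have h2 : ‖w‖^2 = (n:ℝ) - 1 := by rw [← real_inner_self_eq_norm_sq]; exact hww
    rw [← h2, Real.sqrt_sq (norm_nonneg w)]
  have hr : 0 < Real.sqrt ((n:ℝ) - 1) := Real.sqrt_pos.mpr (by linarith)
  have hfw : f * ‖w‖ ≤ 1 := by
    rw [hnw]
    calc f * Real.sqrt ((n:ℝ)-1) ≤ (Real.sqrt ((n:ℝ)-1))⁻¹ * Real.sqrt ((n:ℝ)-1) :=
          mul_le_mul_of_nonneg_right hf' hr.le
      _ = 1 := inv_mul_cancel₀ hr.ne'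
  have hipq : (inner ℝ u1 q0 : ℝ) = 1/2 := by
    rw [hq0, real_inner_smul_right, inner_add_right, real_inner_smul_right, hip1, hipw]
    ring
  constructor
  · rw [hq0, norm_smul]
    have hb : ‖u1 + f • w‖ ≤ 2 := by
      calc ‖u1 + f • w‖ ≤ ‖u1‖ + ‖f • w‖ := norm_add_le _ _
        _ = 1 + |f| * ‖w‖ := by rw [hnu1, norm_smul, Real.norm_eq_abs]
        _ = 1 + f * ‖w‖ := by rw [abs_of_pos hf]
        _ ≤ 2 := by linarith
    rw [Real.norm_eq_abs]
    calc |(1:ℝ)/2| * ‖u1 + f • w‖ ≤ (1/2) * 2 := by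
          rw [abs_of_pos (by norm_num : (0:ℝ) < 1/2)]
          exact mul_le_mul_of_nonneg_left hb (by norm_num)
      _ = 1 := by norm_num
  · intro M hM1 hM2
    have hspan : eigSpan Dstar M = (ℝ ∙ u1) := by
      apply le_antisymm
      · refine iSup₂_le fun μ hμ => ?_
        intro v hv
        rw [Module.End.mem_eigenspace_iff, hT] at hv
        have hμM : M ≤ |μ| := hμ
        have hμhalf : μ + 1/2 ≠ 0 := by
          intro h
          have hμe : μ = -(1/2) := by linarith
          rw [hμe] at hμM
          rw [abs_neg, abs_of_pos (by norm_num : (0:ℝ) < 1/2)] at hμM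
          linarith
        rw [sub_eq_iff_eq_add] at hv
        have h1 : (μ + 1/2) • v = (-((n:ℝ)/2) * (inner ℝ u1 v : ℝ)) • u1 := by
          rw [add_smul, ← hv]
        refine Submodule.mem_span_singleton.mpr
          ⟨(μ + 1/2)⁻¹ * (-((n:ℝ)/2) * (inner ℝ u1 v : ℝ)), ?_⟩
        rw [mul_smul, ← h1, smul_smul, inv_mul_cancel₀ hμhalf, one_smul]
      · rw [Submodule.span_le, Set.singleton_subset_iff]
        have hmem : u1 ∈ Module.End.eigenspace (Matrix.toEuclideanLin Dstar)
            (-(((n : ℝ) + 1) / 2)) := Module.End.mem_eigenspace_iff.mpr heig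
        refine Submodule.mem_iSup_of_mem (-(((n : ℝ) + 1) / 2))
          (Submodule.mem_iSup_of_mem ?_ hmem)
        show M ≤ |(-(((n : ℝ) + 1) / 2))|
        rw [abs_neg, abs_of_nonneg (by positivity)]
        exact hM2
    have hproj : projVec (eigSpan Dstar M) q0 = (1 / 2 : ℝ) • u1 := by
      rw [projVec, hspan, ← Submodule.starProjection_apply, Submodule.starProjection_singleton, hipq, hnu1]
      norm_num
    have hnorm : ‖projVec (eigSpan Dstar M) q0‖ = 1 / 2 := by
      rw [hproj, norm_smul, hnu1, Real.norm_eq_abs]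
      norm_num
    exact ⟨hproj, hnorm, by rw [hnorm]; norm_num⟩
end
end
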